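/- Let X be a topologically enriched small category with at least one object and let g: Z → X be a map of flows which is a weak equivalence of the q-model structure of Flow (a bijection on states and weak homotopy equivalences on all path spaces), for instance a q-cofibrant replacement of X. Then the induced enriched functor 𝕀(Z) → X is not a weak equivalence of (Cat)_q: for any object α, the map 𝕀(Z)(α,α) = {id_α} ⊔ P_{α,α}Z → X(α,α) is not a weak homotopy equivalence. Consequently the left Quillen adjoint 𝕀: (Flow)_q → (Cat)_q is not a left Quillen equivalence. -/

import Mathlib

open CategoryTheory

noncomputable section

/-! ### Flows: small semicategories enriched in topological spaces -/

structure DFlow : Type 1 where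
  States : Type
  Path : States → States → Type
  str : ∀ α β, TopologicalSpace (Path α β)
  comp : ∀ {α β γ : States}, Path α β → Path β γ → Path α γ
  continuous_comp : ∀ α β γ, Continuous (fun p : Path α β × Path β γ => comp p.1 p.2)
  assoc : ∀ {α β γ δ : States} (x : Path α β) (y : Path β γ) (z : Path γ δ),
    comp (comp x y) z = comp x (comp y z)

attribute [instance] DFlow.str

/-- Morphisms of flows. -/
structure FlowHom (X Y : DFlow) where
  toFun : X.States → Y.States
  map : ∀ {α β : X.States}, X.Path α β → Y.Path (toFun α) (toFun β)
  continuous_map : ∀ α β : X.States, Continuous fun p : X.Path α β => map p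
  map_comp : ∀ {α β γ : X.States} (x : X.Path α β) (y : X.Path β γ),
    map (X.comp x y) = Y.comp (map x) (map y)

instance : Category DFlow where
  Hom := FlowHom
  id X := ⟨id, fun p => p, fun _ _ => continuous_id, fun _ _ => rfl⟩
  comp f g := ⟨g.toFun ∘ f.toFun, fun p => g.map (f.map p),
    fun α β => (g.continuous_map _ _).comp (f.continuous_map _ _),
    fun x y => by simp only [f.map_comp, g.map_comp]⟩

lemma continuous_of_isEmpty {X Y : Type} [TopologicalSpace X] [TopologicalSpace Y]
    (h : IsEmpty X) (f : X → Y) : Continuous f :=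
  continuous_iff_continuousAt.mpr fun x => h.elim x

/-- A set viewed as a flow with empty spaces of execution paths. -/
def DFlow.ofSet (S : Type) : DFlow where
  States := S
  Path _ _ := Empty
  str _ _ := ⊥
  comp x _ := x.elim
  continuous_comp _ _ _ := continuous_of_isEmpty (inferInstanceAs (IsEmpty (Empty × Empty))) _
  assoc x _ _ := x.elim

/-- The empty flow. -/
def emptyFlow : DFlow := DFlow.ofSet Empty

/-- The flow `{0}` with one state and no execution path. -/
def pointFlow : DFlow := DFlow.ofSet PUnit

/-- The flow `{0, 1}` with two states and no execution path. -/
def twoFlow : DFlow := DFlow.ofSet Bool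

/-- The terminal flow. -/
def terminalFlow : DFlow where
  States := PUnit
  Path _ _ := PUnit
  str _ _ := ⊥
  comp _ _ := PUnit.unit
  continuous_comp _ _ _ := continuous_const
  assoc _ _ _ := rfl

/-- The map of flows `C : ∅ → {0}`. -/
def Cmap : emptyFlow ⟶ pointFlow :=
  ⟨fun x => x.elim, fun {α} _ _ => α.elim, fun α _ => α.elim, fun {α} _ _ _ _ => α.elim⟩

/-- The map of flows `R : {0,1} → {0}`. -/
def Rmap : twoFlow ⟶ pointFlow :=
  ⟨fun _ => PUnit.unit, fun p => p.elim, fun _ _ => @continuous_of_isEmpty _ _ (twoFlow.str _ _) (pointFlow.str _ _) (inferInstanceAs (IsEmpty Empty)) _, fun x _ => x.elim⟩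

/-- The map of flows `C⁺ : {0} → {0,1}`. -/
def Cplus : pointFlow ⟶ twoFlow :=
  ⟨fun _ => false, fun p => p.elim, fun _ _ => @continuous_of_isEmpty _ _ (pointFlow.str _ _) (twoFlow.str _ _) (inferInstanceAs (IsEmpty Empty)) _, fun x _ => x.elim⟩

/-- The canonical map from the empty flow. -/
def DFlow.fromEmpty (X : DFlow) : emptyFlow ⟶ X :=
  ⟨fun x => x.elim, fun {α} _ => α.elim, fun α _ => α.elim, fun {α} _ _ _ _ => α.elim⟩

/-- The canonical map to the terminal flow. -/
def DFlow.toTerminal (X : DFlow) : X ⟶ terminalFlow :=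
  ⟨fun _ => PUnit.unit, fun _ => PUnit.unit, fun _ _ => @continuous_const _ _ _ (terminalFlow.str _ _) _, fun _ _ => rfl⟩

/-! ### Globes -/

/-- The path spaces of the globe `Glob(Z)`. -/
def GlobPath (Z : Type) : Bool → Bool → Type
  | false, true => Z
  | _, _ => Empty

instance globPathTop (Z : Type) [TopologicalSpace Z] :
    ∀ a b, TopologicalSpace (GlobPath Z a b)
  | false, true => inferInstanceAs (TopologicalSpace Z)
  | false, false => ⊥
  | true, false => ⊥
  | true, true => ⊥

instance globPathIsEmpty (Z : Type) : ∀ (a : Bool), IsEmpty (GlobPath Z a a)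
  | false => inferInstanceAs (IsEmpty Empty)
  | true => inferInstanceAs (IsEmpty Empty)

/-- The globe of a topological space. -/
def DFlow.glob (Z : Type) [TopologicalSpace Z] : DFlow where
  States := Bool
  Path := GlobPath Z
  str := globPathTop Z
  comp {a b c} x y :=
    match a, b, c, x, y with
    | false, false, _, x, _ => x.elim
    | false, true, false, _, y => y.elim
    | false, true, true, _, y => y.elim
    | true, false, _, x, _ => x.elim
    | true, true, _, x, _ => x.elim
  continuous_comp a b c :=
    match a, b, c with
    | false, false, false => continuous_of_isEmpty ⟨fun p => p.1.elim⟩ _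
    | false, false, true => continuous_of_isEmpty ⟨fun p => p.1.elim⟩ _
    | false, true, false => continuous_of_isEmpty ⟨fun p => p.2.elim⟩ _
    | false, true, true => continuous_of_isEmpty ⟨fun p => p.2.elim⟩ _
    | true, false, false => continuous_of_isEmpty ⟨fun p => p.1.elim⟩ _
    | true, false, true => continuous_of_isEmpty ⟨fun p => p.1.elim⟩ _
    | true, true, false => continuous_of_isEmpty ⟨fun p => p.1.elim⟩ _
    | true, true, true => continuous_of_isEmpty ⟨fun p => p.1.elim⟩ _
  assoc {a b c d} x y z :=
    match a, b, c, d, x, y, z with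
    | false, false, _, _, x, _, _ => x.elim
    | false, true, false, _, _, y, _ => y.elim
    | false, true, true, false, _, y, _ => y.elim
    | false, true, true, true, _, y, _ => y.elim
    | true, _, _, _, x, _, _ => x.elim

/-- The functorial action of `Glob` on a continuous map. -/
def DFlow.globMap {Z W : Type} [TopologicalSpace Z] [TopologicalSpace W] (f : Z → W)
    (hf : Continuous f) : DFlow.glob Z ⟶ DFlow.glob W where
  toFun := id
  map {a b} x :=
    match a, b, x with
    | false, true, x => f x
    | false, false, x => x.elim
    | true, false, x => x.elim
    | true, true, x => x.elim
  continuous_map a b :=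
    match a, b with
    | false, true => hf
    | false, false => @continuous_of_isEmpty _ _ ((DFlow.glob Z).str _ _) ((DFlow.glob W).str _ _) (inferInstanceAs (IsEmpty Empty)) _
    | true, false => @continuous_of_isEmpty _ _ ((DFlow.glob Z).str _ _) ((DFlow.glob W).str _ _) (inferInstanceAs (IsEmpty Empty)) _
    | true, true => @continuous_of_isEmpty _ _ ((DFlow.glob Z).str _ _) ((DFlow.glob W).str _ _) (inferInstanceAs (IsEmpty Empty)) _
  map_comp {a b c} x y :=
    match a, b, c, x, y with
    | false, false, _, x, _ => x.elim
    | false, true, false, _, y => y.elim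
    | false, true, true, _, y => y.elim
    | true, _, _, x, _ => x.elim

/-- The directed segment, the globe of a one-point space. -/
def Iseg : DFlow := DFlow.glob PUnit

/-! ### Disks and spheres -/

/-- The `n`-dimensional disk `D^n`. -/
def gDisk (n : ℕ) : Type := (Metric.closedBall (0 : EuclideanSpace ℝ (Fin n)) 1 : Set _)

/-- The sphere `S^{n-1}`, boundary of the `n`-dimensional disk. -/
def gSphere (n : ℕ) : Type := (Metric.sphere (0 : EuclideanSpace ℝ (Fin n)) 1 : Set _)

instance (n : ℕ) : TopologicalSpace (gDisk n) :=
  inferInstanceAs (TopologicalSpace (Metric.closedBall (0 : EuclideanSpace ℝ (Fin n)) 1))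

instance (n : ℕ) : TopologicalSpace (gSphere n) :=
  inferInstanceAs (TopologicalSpace (Metric.sphere (0 : EuclideanSpace ℝ (Fin n)) 1))

/-- The inclusion `S^{n-1} ⊆ D^n`. -/
def sphereIncl (n : ℕ) : gSphere n → gDisk n :=
  fun x => ⟨x.1, Metric.sphere_subset_closedBall x.2⟩

lemma continuous_sphereIncl (n : ℕ) : Continuous (sphereIncl n) :=
  Continuous.subtype_mk continuous_subtype_val _

/-- The generating cofibration `c_n : Glob(S^{n-1}) → Glob(D^n)`. -/
def cFlow (n : ℕ) : DFlow.glob (gSphere n) ⟶ DFlow.glob (gDisk n) :=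
  DFlow.globMap (sphereIncl n) (continuous_sphereIncl n)

/-- `{0}` as a subspace of `ℝ`. -/
def zeroSpace : Type := ({(0 : ℝ)} : Set ℝ)

instance : TopologicalSpace zeroSpace := inferInstanceAs (TopologicalSpace ({(0:ℝ)} : Set ℝ))

/-- The inclusion `D^n × {0} → D^n × [0,1]`. -/
def cylIncl (n : ℕ) : gDisk n × zeroSpace → gDisk n × unitInterval :=
  fun p => (p.1, ⟨p.2.1, by
    rcases p.2 with ⟨x, hx⟩
    simp only [Set.mem_singleton_iff] at hx
    subst hx
    exact unitInterval.zero_mem⟩)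

lemma continuous_cylIncl (n : ℕ) : Continuous (cylIncl n) :=
  continuous_fst.prodMk (Continuous.subtype_mk (continuous_subtype_val.comp continuous_snd) _)

/-- The generating trivial cofibration `Glob(D^n × {0}) → Glob(D^n × [0,1])`. -/
def jFlow (n : ℕ) : DFlow.glob (gDisk n × zeroSpace) ⟶ DFlow.glob (gDisk n × unitInterval) :=
  DFlow.globMap (cylIncl n) (continuous_cylIncl n)

/-! ### Generating sets of maps, as morphism properties -/

/-- The set `I^gl = {c_n : Glob(S^{n-1}) → Glob(D^n) | n ≥ 0}`. -/
def Igl : MorphismProperty DFlow := fun X Y f =>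
  ∃ n : ℕ, X = DFlow.glob (gSphere n) ∧ Y = DFlow.glob (gDisk n) ∧ HEq f (cFlow n)

/-- The set `I^gl_{≥1} = {c_n | n ≥ 1}`. -/
def IglGeOne : MorphismProperty DFlow := fun X Y f =>
  ∃ n : ℕ, 1 ≤ n ∧ X = DFlow.glob (gSphere n) ∧ Y = DFlow.glob (gDisk n) ∧ HEq f (cFlow n)

/-- The set `J^gl`. -/
def Jgl : MorphismProperty DFlow := fun X Y f =>
  ∃ n : ℕ, X = DFlow.glob (gDisk n × zeroSpace) ∧ Y = DFlow.glob (gDisk n × unitInterval) ∧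
    HEq f (jFlow n)

/-- The singleton `{C}`. -/
def Cprop : MorphismProperty DFlow := fun X Y f =>
  X = emptyFlow ∧ Y = pointFlow ∧ HEq f Cmap

/-- The singleton `{R}`. -/
def Rprop : MorphismProperty DFlow := fun X Y f =>
  X = twoFlow ∧ Y = pointFlow ∧ HEq f Rmap

/-- The set `I^gl ∪ {C}`. -/
def IglC : MorphismProperty DFlow := fun _ _ f => Igl f ∨ Cprop f

/-- The set `I^gl ∪ {C, R}`, generating cofibrations of the q-model structure. -/
def IglCR : MorphismProperty DFlow := fun _ _ f => Igl f ∨ Cprop f ∨ Rprop f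

/-! ### Lifting properties, cofibration and injectivity classes -/

/-- `rlpClass S` is `inj(S)`: maps with the RLP with respect to every map of `S`. -/
def rlpClass {M : Type _} [Category M] (S : MorphismProperty M) : MorphismProperty M :=
  fun _ _ p => ∀ {A B : M} (i : A ⟶ B), S i → HasLiftingProperty i p

/-- `llpClass S`: maps with the LLP with respect to every map of `S`. -/
def llpClass {M : Type _} [Category M] (S : MorphismProperty M) : MorphismProperty M :=
  fun _ _ i => ∀ {A B : M} (p : A ⟶ B), S p → HasLiftingProperty i p

/-- `cofClass S` is `cof(S) = llp(inj(S))`. -/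
def cofClass {M : Type _} [Category M] (S : MorphismProperty M) : MorphismProperty M :=
  llpClass (rlpClass S)

/-! ### Model structures -/

/-- A model structure on a category, specified by its weak equivalences,
cofibrations and fibrations. -/
structure ModelStructure (M : Type _) [Category M] where
  W : MorphismProperty M
  C : MorphismProperty M
  F : MorphismProperty M
  w_comp : ∀ {X Y Z : M} (f : X ⟶ Y) (g : Y ⟶ Z), W f → W g → W (f ≫ g)
  w_cancel_left : ∀ {X Y Z : M} (f : X ⟶ Y) (g : Y ⟶ Z), W f → W (f ≫ g) → W g
  w_cancel_right : ∀ {X Y Z : M} (f : X ⟶ Y) (g : Y ⟶ Z), W g → W (f ≫ g) → W f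
  w_retract : ∀ {X Y X' Y' : M} (f : X ⟶ Y) (g : X' ⟶ Y') (iX : X ⟶ X') (rX : X' ⟶ X)
    (iY : Y ⟶ Y') (rY : Y' ⟶ Y), iX ≫ rX = 𝟙 X → iY ≫ rY = 𝟙 Y →
    iX ≫ g = f ≫ iY → g ≫ rY = rX ≫ f → W g → W f
  cof_eq : C = llpClass (fun _ _ p => F p ∧ W p)
  fib_eq : F = rlpClass (fun _ _ i => C i ∧ W i)
  factor_triv_cof : ∀ {X Y : M} (f : X ⟶ Y),
    ∃ (Z : M) (i : X ⟶ Z) (p : Z ⟶ Y), C i ∧ W i ∧ F p ∧ i ≫ p = f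
  factor_triv_fib : ∀ {X Y : M} (f : X ⟶ Y),
    ∃ (Z : M) (i : X ⟶ Z) (p : Z ⟶ Y), C i ∧ F p ∧ W p ∧ i ≫ p = f

/-! ### The class of weak equivalences `W̄_DK` -/

/-- A flow "is a set": it has no execution path. -/
def DFlow.IsSetFlow (X : DFlow) : Prop := ∀ α β : X.States, IsEmpty (X.Path α β)

/-- A flow has at least one execution path. -/
def DFlow.HasExecPath (X : DFlow) : Prop := ∃ α β : X.States, Nonempty (X.Path α β)

/-- The class `W̄_DK` of maps of flows. -/
def WbarDK : MorphismProperty DFlow := fun X Y _ =>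
  (IsEmpty X.States ∧ IsEmpty Y.States) ∨
  (Nonempty X.States ∧ Nonempty Y.States ∧ X.IsSetFlow ∧ Y.IsSetFlow) ∨
  (X.HasExecPath ∧ Y.HasExecPath)

/-! ### Binary coproducts of flows -/

/-- Path spaces of the coproduct of two flows. -/
def SumPath (X Y : DFlow) : X.States ⊕ Y.States → X.States ⊕ Y.States → Type
  | .inl a, .inl b => X.Path a b
  | .inr a, .inr b => Y.Path a b
  | _, _ => Empty

instance sumPathTop (X Y : DFlow) : ∀ a b, TopologicalSpace (SumPath X Y a b)
  | .inl a, .inl b => inferInstanceAs (TopologicalSpace (X.Path a b))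
  | .inr a, .inr b => inferInstanceAs (TopologicalSpace (Y.Path a b))
  | .inl _, .inr _ => ⊥
  | .inr _, .inl _ => ⊥

/-- The coproduct of two flows. -/
def DFlow.sum (X Y : DFlow) : DFlow where
  States := X.States ⊕ Y.States
  Path := SumPath X Y
  str := sumPathTop X Y
  comp {a b c} x y :=
    match a, b, c, x, y with
    | .inl _, .inl _, .inl _, x, y => X.comp x y
    | .inr _, .inr _, .inr _, x, y => Y.comp x y
    | .inl _, .inl _, .inr _, _, y => y.elim
    | .inl _, .inr _, _, x, _ => x.elim
    | .inr _, .inl _, _, x, _ => x.elim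
    | .inr _, .inr _, .inl _, _, y => y.elim
  continuous_comp a b c :=
    match a, b, c with
    | .inl _, .inl _, .inl _ => X.continuous_comp _ _ _
    | .inr _, .inr _, .inr _ => Y.continuous_comp _ _ _
    | .inl _, .inl _, .inr _ => continuous_of_isEmpty ⟨fun p => p.2.elim⟩ _
    | .inl _, .inr _, _ => continuous_of_isEmpty ⟨fun p => p.1.elim⟩ _
    | .inr _, .inl _, _ => continuous_of_isEmpty ⟨fun p => p.1.elim⟩ _
    | .inr _, .inr _, .inl _ => continuous_of_isEmpty ⟨fun p => p.2.elim⟩ _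
  assoc {a b c d} x y z :=
    match a, b, c, d, x, y, z with
    | .inl _, .inl _, .inl _, .inl _, x, y, z => X.assoc x y z
    | .inr _, .inr _, .inr _, .inr _, x, y, z => Y.assoc x y z
    | .inl _, .inl _, .inl _, .inr _, _, _, z => z.elim
    | .inl _, .inl _, .inr _, _, _, y, _ => y.elim
    | .inl _, .inr _, _, _, x, _, _ => x.elim
    | .inr _, .inl _, _, _, x, _, _ => x.elim
    | .inr _, .inr _, .inl _, _, _, y, _ => y.elim
    | .inr _, .inr _, .inr _, .inl _, _, _, z => z.elim

/-- The coproduct of two maps of flows. -/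
def DFlow.sumMap {X X' Y Y' : DFlow} (f : X ⟶ X') (g : Y ⟶ Y') : X.sum Y ⟶ X'.sum Y' where
  toFun := Sum.map f.toFun g.toFun
  map {a b} x :=
    match a, b, x with
    | .inl _, .inl _, x => f.map x
    | .inr _, .inr _, x => g.map x
    | .inl _, .inr _, x => x.elim
    | .inr _, .inl _, x => x.elim
  continuous_map a b :=
    match a, b with
    | .inl _, .inl _ => f.continuous_map _ _
    | .inr _, .inr _ => g.continuous_map _ _
    | .inl _, .inr _ => @continuous_of_isEmpty _ _ ((X.sum Y).str _ _) ((X'.sum Y').str _ _) (inferInstanceAs (IsEmpty Empty)) _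
    | .inr _, .inl _ => @continuous_of_isEmpty _ _ ((X.sum Y).str _ _) ((X'.sum Y').str _ _) (inferInstanceAs (IsEmpty Empty)) _
  map_comp {a b c} x y :=
    match a, b, c, x, y with
    | .inl _, .inl _, .inl _, x, y => f.map_comp x y
    | .inr _, .inr _, .inr _, x, y => g.map_comp x y
    | .inl _, .inl _, .inr _, _, y => y.elim
    | .inl _, .inr _, _, x, _ => x.elim
    | .inr _, .inl _, _, x, _ => x.elim
    | .inr _, .inr _, .inl _, _, y => y.elim

/-- The map `c₀⁺ = id_{I⃗} ⊔ c₀ : I⃗ ⊔ Glob(S^{-1}) → I⃗ ⊔ Glob(D⁰)`. -/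
def cZeroPlus : Iseg.sum (DFlow.glob (gSphere 0)) ⟶ Iseg.sum (DFlow.glob (gDisk 0)) :=
  DFlow.sumMap (𝟙 Iseg) (cFlow 0)

/-- The singleton `{C⁺}`. -/
def CplusProp : MorphismProperty DFlow := fun X Y f =>
  X = pointFlow ∧ Y = twoFlow ∧ HEq f Cplus

/-- The singleton `{c₀⁺}`. -/
def cZeroPlusProp : MorphismProperty DFlow := fun X Y f =>
  X = Iseg.sum (DFlow.glob (gSphere 0)) ∧ Y = Iseg.sum (DFlow.glob (gDisk 0)) ∧ HEq f cZeroPlus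

/-- The set `{C⁺, c₀⁺} ∪ J^gl ∪ I^gl_{≥1}`. -/
def TrivCofGen : MorphismProperty DFlow := fun _ _ f =>
  CplusProp f ∨ cZeroPlusProp f ∨ Jgl f ∨ IglGeOne f

/-! ### Small categories enriched in topological spaces -/

structure ECat : Type 1 where
  Obj : Type
  Hom : Obj → Obj → Type
  str : ∀ a b, TopologicalSpace (Hom a b)
  eid : ∀ a, Hom a a
  comp : ∀ {a b c : Obj}, Hom a b → Hom b c → Hom a c
  continuous_comp : ∀ a b c, Continuous (fun p : Hom a b × Hom b c => comp p.1 p.2)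
  id_comp : ∀ {a b : Obj} (f : Hom a b), comp (eid a) f = f
  comp_id : ∀ {a b : Obj} (f : Hom a b), comp f (eid b) = f
  assoc : ∀ {a b c d : Obj} (x : Hom a b) (y : Hom b c) (z : Hom c d),
    comp (comp x y) z = comp x (comp y z)

attribute [instance] ECat.str

/-- Topologically enriched functors, the morphisms of `ECat`. -/
structure EFunctor (X Y : ECat) where
  toFun : X.Obj → Y.Obj
  map : ∀ {a b : X.Obj}, X.Hom a b → Y.Hom (toFun a) (toFun b)
  continuous_map : ∀ a b : X.Obj, Continuous fun p : X.Hom a b => map p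
  map_id : ∀ a : X.Obj, map (X.eid a) = Y.eid (toFun a)
  map_comp : ∀ {a b c : X.Obj} (x : X.Hom a b) (y : X.Hom b c),
    map (X.comp x y) = Y.comp (map x) (map y)

instance : Category ECat where
  Hom := EFunctor
  id X := ⟨id, fun p => p, fun _ _ => continuous_id, fun _ => rfl, fun _ _ => rfl⟩
  comp f g := ⟨g.toFun ∘ f.toFun, fun p => g.map (f.map p),
    fun a b => (g.continuous_map _ _).comp (f.continuous_map _ _),
    fun a => by simp only [f.map_id, g.map_id]; rfl,
    fun x y => by simp only [f.map_comp, g.map_comp]⟩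

/-- The forgetful functor from enriched small categories to flows,
i.e. the inclusion `Cat ⊂ Flow`. -/
def forgetECat : ECat ⥤ DFlow where
  obj X := ⟨X.Obj, X.Hom, X.str, X.comp, X.continuous_comp, X.assoc⟩
  map f := ⟨f.toFun, f.map, f.continuous_map, f.map_comp⟩
  map_id _ := rfl
  map_comp _ _ := rfl

/-! ### Weak homotopy equivalences and Serre fibrations -/

/-- The map induced on path components by a continuous map. -/
def zerothMap {X Y : Type} [TopologicalSpace X] [TopologicalSpace Y] (f : C(X, Y)) :
    ZerothHomotopy X → ZerothHomotopy Y :=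
  Quotient.map' f (fun a b (h : Joined a b) => (⟨h.somePath.map f.continuous⟩ : Joined _ _))

/-- The map induced on generalized loops by a continuous map. -/
def genLoopMap {X Y : Type} [TopologicalSpace X] [TopologicalSpace Y] (f : C(X, Y))
    {N : Type} {x : X} (g : GenLoop N X x) : GenLoop N Y (f x) :=
  ⟨f.comp g.1, fun y hy => by simp [g.2 y hy]⟩

/-- The map induced on homotopy groups by a continuous map. -/
def homotopyGroupMap {X Y : Type} [TopologicalSpace X] [TopologicalSpace Y] (f : C(X, Y))
    (N : Type) (x : X) : HomotopyGroup N X x → HomotopyGroup N Y (f x) :=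
  Quotient.map' (genLoopMap f)
    (fun g h (H : GenLoop.Homotopic g h) =>
      (H.elim (fun K => ⟨K.compContinuousMap f⟩) : GenLoop.Homotopic _ _))

/-- A continuous map is a weak homotopy equivalence if it induces a bijection on
path components and bijections on all homotopy groups at all base points. -/
def IsWeakHomotopyEquiv {X Y : Type} [TopologicalSpace X] [TopologicalSpace Y]
    (f : C(X, Y)) : Prop :=
  Function.Bijective (zerothMap f) ∧
    ∀ (n : ℕ) (x : X), Function.Bijective (homotopyGroupMap f (Fin n) x)

/-- A continuous map is a Serre fibration (q-fibration) if it has the homotopy lifting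
property with respect to all disks. -/
def IsSerreFibration {X Y : Type} [TopologicalSpace X] [TopologicalSpace Y]
    (f : C(X, Y)) : Prop :=
  ∀ (n : ℕ) (g : C(gDisk n, X)) (H : C(gDisk n × unitInterval, Y)),
    (∀ d, H (d, 0) = f (g d)) →
    ∃ G : C(gDisk n × unitInterval, X),
      (∀ d, G (d, 0) = g d) ∧ ∀ p, f (G p) = H p

/-! ### Miscellaneous constructions -/

/-- The image of a class of maps of flows under a functor `Flow ⥤ Cat`. -/
def imageProp (Idf : DFlow ⥤ ECat) (P : MorphismProperty DFlow) : MorphismProperty ECat :=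
  fun A B g => ∃ (X Y : DFlow) (f : X ⟶ Y), P f ∧
    ∃ (_ : Idf.obj X = A) (_ : Idf.obj Y = B), HEq (Idf.map f) g

/-- The inverse image of a class of maps of enriched categories under a functor. -/
def invImageProp (Idf : DFlow ⥤ ECat) (P : MorphismProperty ECat) : MorphismProperty DFlow :=
  fun _ _ f => P (Idf.map f)

/-- The terminal enriched small category. -/
def terminalECat : ECat where
  Obj := PUnit
  Hom _ _ := PUnit
  str _ _ := ⊥
  eid _ := PUnit.unit
  comp _ _ := PUnit.unit
  continuous_comp _ _ _ := continuous_const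
  id_comp _ := rfl
  comp_id _ := rfl
  assoc _ _ _ := rfl

/-- The canonical enriched functor to the terminal enriched category. -/
def ECat.toTerminal (X : ECat) : X ⟶ terminalECat :=
  ⟨fun _ => PUnit.unit, fun _ => PUnit.unit, fun _ _ => @continuous_const _ _ _ (terminalECat.str _ _) _,
    fun _ => rfl, fun _ _ => rfl⟩

/-- The empty enriched small category. -/
def emptyECat : ECat where
  Obj := Empty
  Hom a _ := a.elim
  str a _ := a.elim
  eid a := a.elim
  comp {a} _ _ := a.elim
  continuous_comp a _ _ := a.elim
  id_comp {a} _ := a.elim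
  comp_id {a} _ := a.elim
  assoc {a} _ _ _ := a.elim

/-- The canonical enriched functor from the empty enriched category. -/
def ECat.fromEmpty (X : ECat) : emptyECat ⟶ X :=
  ⟨fun a => a.elim, fun {a} _ => a.elim, fun a _ => a.elim, fun a => a.elim,
    fun {a} _ _ => a.elim⟩

/-- The small category `{0 ≅ 1}` with two isomorphic objects,
the chaotic category on two objects. -/
def isoCat : ECat where
  Obj := Bool
  Hom _ _ := PUnit
  str _ _ := ⊥
  eid _ := PUnit.unit
  comp _ _ := PUnit.unit
  continuous_comp _ _ _ := continuous_const
  id_comp _ := rfl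
  comp_id _ := rfl
  assoc _ _ _ := rfl

/-- The weak equivalences of the q-model structure on `Cat`: enriched functors
bijective on objects inducing weak homotopy equivalences on all morphism spaces. -/
def WqECat : MorphismProperty ECat := fun X _ F =>
  Function.Bijective F.toFun ∧
    ∀ a b : X.Obj, IsWeakHomotopyEquiv ⟨fun x : X.Hom a b => F.map x, F.continuous_map a b⟩

/-- The fibrations of the q-model structure on `Cat`: enriched functors inducing Serre
fibrations (q-fibrations) on all morphism spaces. -/
def FqECat : MorphismProperty ECat := fun X _ F =>
  ∀ a b : X.Obj, IsSerreFibration ⟨fun x : X.Hom a b => F.map x, F.continuous_map a b⟩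

/-- The weak equivalences of the q-model structure of flows: bijections on states
inducing weak homotopy equivalences on all path spaces. -/
def WqFlow : MorphismProperty DFlow := fun X _ f =>
  Function.Bijective f.toFun ∧
    ∀ a b : X.States,
      IsWeakHomotopyEquiv ⟨fun x : X.Path a b => f.map x, f.continuous_map a b⟩


/-! ### Auxiliary material for the proof -/

section Aux

instance ecatHomTopForget (Y : ECat) (a b : (forgetECat.obj Y).States) : TopologicalSpace (Y.Hom a b) :=
  Y.str a b

instance plift_top (p : Prop) : TopologicalSpace (PLift p) := ⊥
instance plift_disc (p : Prop) : DiscreteTopology (PLift p) := ⟨rfl⟩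

section sums
variable {A B C Y : Type} [TopologicalSpace A] [TopologicalSpace B] [TopologicalSpace C]
  [TopologicalSpace Y]

lemma continuous_sum_prod_dom {f : (A ⊕ B) × C → Y}
    (h1 : Continuous fun p : A × C => f (.inl p.1, p.2))
    (h2 : Continuous fun p : B × C => f (.inr p.1, p.2)) : Continuous f := by
  have he : f = (Sum.elim (fun p : A × C => f (.inl p.1, p.2))
      (fun p : B × C => f (.inr p.1, p.2))) ∘
      (Homeomorph.sumProdDistrib (X:=A) (Y:=B) (Z:=C)) := by
    funext ⟨x, c⟩; cases x <;> rfl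
  rw [he]
  exact (Continuous.sumElim h1 h2).comp (Homeomorph.sumProdDistrib (X:=A) (Y:=B) (Z:=C)).continuous

lemma continuous_prod_sum_dom {f : A × (B ⊕ C) → Y}
    (h1 : Continuous fun p : A × B => f (p.1, .inl p.2))
    (h2 : Continuous fun p : A × C => f (p.1, .inr p.2)) : Continuous f := by
  have he : f = (Sum.elim (fun p : A × B => f (p.1, .inl p.2))
      (fun p : A × C => f (p.1, .inr p.2))) ∘
      (Homeomorph.prodSumDistrib (X:=A) (Y:=B) (Z:=C)) := by
    funext ⟨a, x⟩; cases x <;> rfl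
  rw [he]
  exact (Continuous.sumElim h1 h2).comp (Homeomorph.prodSumDistrib (X:=A) (Y:=B) (Z:=C)).continuous

lemma not_joined_inl_inr (x : A) (y : B) : ¬ Joined (Sum.inl x : A ⊕ B) (Sum.inr y) := by
  intro h
  obtain ⟨γ⟩ := h
  have hc : IsClopen (γ ⁻¹' (Set.range Sum.inl)) := isClopen_range_inl.preimage γ.continuous
  rcases isClopen_iff.mp hc with h0 | h0
  · have : (0 : unitInterval) ∈ γ ⁻¹' (Set.range Sum.inl) := by
      simp [γ.source]
    rw [h0] at this; exact this
  · have : (1 : unitInterval) ∈ γ ⁻¹' (Set.range Sum.inl) := by rw [h0]; trivial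
    rw [Set.mem_preimage, γ.target] at this
    obtain ⟨a, ha⟩ := this
    exact Sum.inl_ne_inr ha

lemma heq_inr_inl_false {A A' B B' : Type} (hA : A = A') (hB : B = B') (x : B) (y : A') :
    HEq (Sum.inr x : A ⊕ B) (Sum.inl y : A' ⊕ B') → False := by
  subst hA; subst hB; intro h; exact Sum.inr_ne_inl (eq_of_heq h)

end sums

/-! #### extensionality helpers -/

lemma FlowHom.ext' {X Y : DFlow} {f g : X ⟶ Y} (h1 : f.toFun = g.toFun)
    (h2 : ∀ (a b : X.States) (p : X.Path a b), HEq (f.map p) (g.map p)) : f = g := by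
  obtain ⟨f1, f2, f3, f4⟩ := f
  obtain ⟨g1, g2, g3, g4⟩ := g
  simp only at h1
  subst h1
  have hm : @f2 = @g2 := by
    funext a b p
    exact eq_of_heq (h2 a b p)
  subst hm
  rfl

lemma FlowHom.map_heq' {X Y : DFlow} {f g : X ⟶ Y} (e : f = g) {a b : X.States}
    (p : X.Path a b) : HEq (f.map p) (g.map p) := by subst e; rfl

lemma EFunctor.map_heq' {X Y : ECat} {f g : X ⟶ Y} (e : f = g) {a b : X.Obj}
    (m : X.Hom a b) : HEq (f.map m) (g.map m) := by subst e; rfl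

/-! #### weak homotopy equivalences: degenerate cases -/

lemma subsingleton_quotient {α : Sort _} [Subsingleton α] (s : Setoid α) :
    Subsingleton (Quotient s) :=
  ⟨fun x y => Quotient.inductionOn₂ x y fun a b => by rw [Subsingleton.elim a b]⟩

lemma bijective_of_subsingleton {A B : Sort _} [Nonempty A] [Subsingleton A] [Subsingleton B]
    (f : A → B) : Function.Bijective f :=
  ⟨fun x y _ => Subsingleton.elim x y,
   fun y => ⟨Classical.arbitrary A, Subsingleton.elim _ _⟩⟩

lemma whe_of_subsingleton {A B : Type} [TopologicalSpace A] [TopologicalSpace B]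
    [Nonempty A] [Subsingleton A] [Nonempty B] [Subsingleton B] (f : C(A, B)) :
    IsWeakHomotopyEquiv f := by
  constructor
  · haveI : Subsingleton (ZerothHomotopy A) := subsingleton_quotient _
    haveI : Subsingleton (ZerothHomotopy B) := subsingleton_quotient _
    haveI : Nonempty (ZerothHomotopy A) := ⟨Quotient.mk _ (Classical.arbitrary A)⟩
    exact bijective_of_subsingleton _
  · intro n x
    haveI hsA : Subsingleton (GenLoop (Fin n) A x) :=
      ⟨fun g h => Subtype.ext (ContinuousMap.ext fun t => Subsingleton.elim _ _)⟩
    haveI hsB : Subsingleton (GenLoop (Fin n) B (f x)) :=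
      ⟨fun g h => Subtype.ext (ContinuousMap.ext fun t => Subsingleton.elim _ _)⟩
    haveI : Subsingleton (HomotopyGroup (Fin n) A x) := subsingleton_quotient _
    haveI : Subsingleton (HomotopyGroup (Fin n) B (f x)) := subsingleton_quotient _
    haveI : Nonempty (HomotopyGroup (Fin n) A x) := ⟨Quotient.mk _ GenLoop.const⟩
    exact bijective_of_subsingleton _

lemma not_whe_of_isEmpty {A B : Type} [TopologicalSpace A] [TopologicalSpace B]
    [IsEmpty A] [Nonempty B] (f : C(A, B)) : ¬ IsWeakHomotopyEquiv f := by
  intro hwe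
  obtain ⟨q, -⟩ := hwe.1.2 (Quotient.mk _ (Classical.arbitrary B))
  obtain ⟨a, -⟩ := q.exists_rep
  exact IsEmpty.false a

/-! #### the concrete free category `𝕀(W)` on a flow `W` -/

variable (W : DFlow)

/-- Hom spaces of `𝕀(W)`: paths of `W` plus a freely added isolated identity. -/
def IHom (a b : W.States) : Type := W.Path a b ⊕ PLift (a = b)

instance (a b : W.States) : TopologicalSpace (IHom W a b) :=
  inferInstanceAs (TopologicalSpace (W.Path a b ⊕ PLift (a = b)))

/-- Composition in `𝕀(W)`. -/
def icomp : ∀ {a b c : W.States}, IHom W a b → IHom W b c → IHom W a c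
  | _, _, _, .inl p, .inl q => .inl (W.comp p q)
  | _, _, _, .inl p, .inr ⟨rfl⟩ => .inl p
  | _, _, _, .inr ⟨rfl⟩, .inl q => .inl q
  | _, _, _, .inr ⟨rfl⟩, .inr ⟨rfl⟩ => .inr ⟨rfl⟩

lemma icomp_continuous (a b c : W.States) :
    Continuous fun p : IHom W a b × IHom W b c => icomp W p.1 p.2 := by
  apply continuous_sum_prod_dom
  · apply continuous_prod_sum_dom
    · exact continuous_inl.comp (W.continuous_comp a b c)
    · by_cases h : b = c
      · subst h
        have he : (fun p : W.Path a b × PLift (b = b) => icomp W (.inl p.1) (.inr p.2))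
            = fun p => .inl p.1 := by
          funext ⟨p, e⟩
          rfl
        rw [he]
        exact continuous_inl.comp continuous_fst
      · exact continuous_of_isEmpty ⟨fun p => h p.2.down⟩ _
  · by_cases h : a = b
    · subst h
      have he : (fun p : PLift (a = a) × IHom W a c => icomp W (.inr p.1) p.2)
          = fun p => p.2 := by
        funext ⟨e, y⟩
        cases y with
        | inl q => rfl
        | inr e' =>
          obtain ⟨h'⟩ := e'
          subst h'
          rfl
      rw [he]
      exact continuous_snd
    · exact continuous_of_isEmpty ⟨fun p => h p.1.down⟩ _

/-- The small topologically enriched category freely generated by a flow, by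
adjoining isolated identities. -/
def ICat : ECat where
  Obj := W.States
  Hom := IHom W
  str := inferInstance
  eid a := .inr ⟨rfl⟩
  comp := icomp W
  continuous_comp := icomp_continuous W
  id_comp {a b} f := by
    cases f with
    | inl p => rfl
    | inr e => obtain ⟨h⟩ := e; subst h; rfl
  comp_id {a b} f := by
    cases f with
    | inl p => rfl
    | inr e => obtain ⟨h⟩ := e; subst h; rfl
  assoc {a b c d} x y z := by
    rcases x with p | ex
    · rcases y with q | ey
      · rcases z with r | ez
        · exact congrArg Sum.inl (W.assoc p q r)
        · obtain ⟨hz⟩ := ez; subst hz; rfl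
      · obtain ⟨hy⟩ := ey; subst hy
        rcases z with r | ez
        · rfl
        · obtain ⟨hz⟩ := ez; subst hz; rfl
    · obtain ⟨hx⟩ := ex; subst hx
      rcases y with q | ey
      · rcases z with r | ez
        · rfl
        · obtain ⟨hz⟩ := ez; subst hz; rfl
      · obtain ⟨hy⟩ := ey; subst hy
        rcases z with r | ez
        · rfl
        · obtain ⟨hz⟩ := ez; subst hz; rfl

/-- The unit flow map `W ⟶ 𝕀(W)`. -/
def iunit : W ⟶ forgetECat.obj (ICat W) where
  toFun := id
  map p := .inl p
  continuous_map _ _ := continuous_inl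
  map_comp _ _ := rfl

/-- The underlying map of the enriched functor extending a flow map. -/
def iextMap (Y : ECat) (j : W ⟶ forgetECat.obj Y) {a b : W.States} (m : IHom W a b) :
    Y.Hom (j.toFun a) (j.toFun b) :=
  match m with
  | .inl p => j.map p
  | .inr ⟨rfl⟩ => Y.eid (j.toFun a)

lemma iextMap_continuous (Y : ECat) (j : W ⟶ forgetECat.obj Y) (a b : W.States) :
    Continuous fun m : IHom W a b => iextMap W Y j m := by
  have he : (fun m : IHom W a b => iextMap W Y j m)
      = Sum.elim (fun p : W.Path a b => j.map p)
        (fun e : PLift (a = b) => iextMap W Y j (.inr e)) := by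
    funext m; cases m <;> rfl
  rw [he]
  exact Continuous.sumElim (j.continuous_map a b) continuous_of_discreteTopology

/-- The enriched functor `𝕀(W) ⟶ Y` extending a flow map `W ⟶ Y`. -/
def iext (Y : ECat) (j : W ⟶ forgetECat.obj Y) : ICat W ⟶ Y where
  toFun := j.toFun
  map := iextMap W Y j
  continuous_map := iextMap_continuous W Y j
  map_id a := rfl
  map_comp {a b c} x y := by
    rcases x with p | ex
    · rcases y with q | ey
      · exact j.map_comp p q
      · obtain ⟨hy⟩ := ey; subst hy; exact (Y.comp_id _).symm
    · obtain ⟨hx⟩ := ex; subst hx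
      rcases y with q | ey
      · exact (Y.id_comp _).symm
      · obtain ⟨hy⟩ := ey; subst hy; exact (Y.id_comp _).symm

end Aux


section Key
open CategoryTheory

variable (Idf : DFlow ⥤ ECat) (adj : Idf ⊣ forgetECat) (Z : DFlow)

/-- The main structural lemma: identities in `Idf.obj Z` are isolated. -/
lemma key_lemma :
    (∀ α : (Idf.obj Z).Obj, ∃ b : Z.States, (adj.unit.app Z).toFun b = α) ∧
    (∀ (b : Z.States) (p : Z.Path b b),
      ¬ Joined ((adj.unit.app Z).map p) ((Idf.obj Z).eid ((adj.unit.app Z).toFun b))) := by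
  set η := adj.unit.app Z with hη
  let u : ICat Z ⟶ Idf.obj Z := iext Z (Idf.obj Z) η
  let v : Idf.obj Z ⟶ ICat Z := (adj.homEquiv Z (ICat Z)).symm (iunit Z)
  have e1 : η ≫ forgetECat.map v = iunit Z := by
    have h1 := (adj.homEquiv Z (ICat Z)).apply_symm_apply (iunit Z)
    rw [Adjunction.homEquiv_unit] at h1
    exact h1
  have vu : v ≫ u = 𝟙 (Idf.obj Z) := by
    apply (adj.homEquiv Z (Idf.obj Z)).injective
    rw [Adjunction.homEquiv_unit, Adjunction.homEquiv_unit, Functor.map_comp,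
      ← Category.assoc]
    rw [← hη, e1]
    apply FlowHom.ext' rfl
    intro a b p
    rfl
  constructor
  · intro α
    refine ⟨v.toFun α, ?_⟩
    exact congrFun (congrArg EFunctor.toFun vu) α
  · intro b p hJ
    have hm : HEq (v.map (η.map p)) (Sum.inl p : Z.Path b b ⊕ PLift (b = b)) :=
      FlowHom.map_heq' e1 p
    have hb : v.toFun (η.toFun b) = b := congrFun (congrArg FlowHom.toFun e1) b
    have J3 : Joined (v.map (η.map p)) ((ICat Z).eid (v.toFun (η.toFun b))) := by
      have J := (Nonempty.some hJ).map (v.continuous_map _ _)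
      have := v.map_id (η.toFun b)
      rw [this] at J
      exact ⟨J⟩
    cases hvm : v.map (η.map p) with
    | inl p0 =>
      rw [hvm] at J3
      exact @not_joined_inl_inr _ _ (Z.str _ _) _ _ _ J3
    | inr e =>
      rw [hvm] at hm
      exact heq_inr_inl_false (by rw [hb]) (by rw [hb]) e p hm

end Key

/-- let `X` be a topologically enriched small category with at least
one object and `g : Z → X` a map of flows which is a weak equivalence of the q-model
structure of flows (e.g. a q-cofibrant replacement of `X`). Then for any object the
induced enriched functor `𝕀(Z) → X` is not a weak homotopy equivalence on the
endomorphism space of that object, hence it is not a weak equivalence of `(Cat)_q`;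
consequently the left Quillen adjoint `𝕀 : (Flow)_q → (Cat)_q` is not a left Quillen
equivalence. -/
theorem I_not_left_Quillen_equivalence
    (Idf : DFlow ⥤ ECat) (adj : Idf ⊣ forgetECat)
    (X : ECat) (hX : Nonempty X.Obj) (Z : DFlow) (g : Z ⟶ forgetECat.obj X)
    (hg : WqFlow g) :
    (∀ α : (Idf.obj Z).Obj,
      ¬ IsWeakHomotopyEquiv
        ⟨fun m : (Idf.obj Z).Hom α α => ((adj.homEquiv Z X).symm g).map m,
          ((adj.homEquiv Z X).symm g).continuous_map α α⟩) ∧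
    ¬ WqECat ((adj.homEquiv Z X).symm g) ∧
    ¬ (∀ (A : DFlow) (B : ECat) (f : Idf.obj A ⟶ B),
        cofClass IglCR A.fromEmpty → (WqECat f ↔ WqFlow (adj.homEquiv A B f))) := by
  obtain ⟨hsurj, hnoJ⟩ := key_lemma Idf adj Z
  set η := adj.unit.app Z with hη
  set F := (adj.homEquiv Z X).symm g with hF
  have hgF : η ≫ forgetECat.map F = g := by
    have h1 := (adj.homEquiv Z X).apply_symm_apply g
    rw [Adjunction.homEquiv_unit] at h1
    rw [hη, hF]
    exact h1
  rw [← hgF] at hg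
  -- the three statements
  have conj1 : ∀ α : (Idf.obj Z).Obj,
      ¬ IsWeakHomotopyEquiv
        ⟨fun m : (Idf.obj Z).Hom α α => F.map m, F.continuous_map α α⟩ := by
    intro α
    obtain ⟨b, rfl⟩ := hsurj α
    intro hwe
    -- weak equivalence of the path-space map of `η ≫ forget.map F` at `(b, b)`
    have ψwhe := hg.2 b b
    obtain ⟨q0, hq0⟩ := ψwhe.1.2
      (Quotient.mk _ (X.eid (F.toFun (η.toFun b))))
    obtain ⟨p, hp⟩ := q0.exists_rep
    rw [← hp] at hq0
    have J1 : Joined (F.map (η.map p)) (X.eid (F.toFun (η.toFun b))) := Quotient.exact hq0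
    have e2 : zerothMap (⟨fun m : (Idf.obj Z).Hom (η.toFun b) (η.toFun b) => F.map m,
        F.continuous_map _ _⟩ : C(_, _)) (Quotient.mk _ (η.map p))
        = zerothMap (⟨fun m : (Idf.obj Z).Hom (η.toFun b) (η.toFun b) => F.map m,
        F.continuous_map _ _⟩ : C(_, _)) (Quotient.mk _ ((Idf.obj Z).eid (η.toFun b))) := by
      show Quotient.mk _ (F.map (η.map p)) = Quotient.mk _ (F.map ((Idf.obj Z).eid (η.toFun b)))
      erw [F.map_id]
      exact Quotient.sound J1
    have hJ : Joined (η.map p) ((Idf.obj Z).eid (η.toFun b)) := Quotient.exact (hwe.1.1 e2)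
    exact hnoJ b p hJ
  refine ⟨conj1, ?_, ?_⟩
  · -- not a weak equivalence of `(Cat)_q`
    intro hW
    obtain ⟨x0⟩ := hX
    obtain ⟨z0, hz0⟩ := hg.1.2 x0
    exact conj1 (η.toFun z0) (hW.2 (η.toFun z0) (η.toFun z0))
  · -- `𝕀` is not a left Quillen equivalence
    intro hAll
    -- the counterexample: the point flow mapping to the terminal enriched category
    let h : pointFlow ⟶ forgetECat.obj terminalECat :=
      ⟨fun _ => PUnit.unit, fun _ => PUnit.unit, fun _ _ => @continuous_const _ _ _ (terminalECat.str PUnit.unit PUnit.unit) PUnit.unit,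
        fun x _ => x.elim⟩
    let f : Idf.obj pointFlow ⟶ terminalECat :=
      (adj.homEquiv pointFlow terminalECat).symm h
    have cof : cofClass IglCR pointFlow.fromEmpty := by
      intro A B p hp
      have hCR : IglCR Cmap := Or.inr (Or.inl ⟨rfl, rfl, HEq.rfl⟩)
      have hl := hp Cmap hCR
      have e : pointFlow.fromEmpty = Cmap :=
        FlowHom.ext' (funext fun x => x.elim) (fun a b q => a.elim)
      rw [e]
      exact hl
    have hEquiv : adj.homEquiv pointFlow terminalECat f = h :=
      (adj.homEquiv pointFlow terminalECat).apply_symm_apply h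
    -- `WqECat f` holds
    have hobj : ∀ x : (Idf.obj pointFlow).Obj,
        (adj.unit.app pointFlow).toFun PUnit.unit = x ∧
        ∀ (y : (Idf.obj pointFlow).Obj) (m : (Idf.obj pointFlow).Hom x y),
          HEq ((Idf.obj pointFlow).eid ((adj.unit.app pointFlow).toFun PUnit.unit)) m := by
      have wid : (⟨fun _ => (adj.unit.app pointFlow).toFun PUnit.unit,
          fun {a b} _ => (Idf.obj pointFlow).eid ((adj.unit.app pointFlow).toFun PUnit.unit),
          fun a b => @continuous_const _ _ _ ((Idf.obj pointFlow).str _ _) _, fun a => rfl,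
          fun x y => ((Idf.obj pointFlow).id_comp _).symm⟩ : Idf.obj pointFlow ⟶ Idf.obj pointFlow)
          = 𝟙 (Idf.obj pointFlow) := by
        apply (adj.homEquiv pointFlow (Idf.obj pointFlow)).injective
        rw [Adjunction.homEquiv_unit, Adjunction.homEquiv_unit]
        apply FlowHom.ext'
        · funext x
          rfl
        · intro a b q
          exact q.elim
      intro x
      constructor
      · exact congrFun (congrArg EFunctor.toFun wid) x
      · intro y m
        exact EFunctor.map_heq' wid m
    haveI hsubO : Subsingleton (Idf.obj pointFlow).Obj :=
      ⟨fun x y => ((hobj x).1).symm.trans (hobj y).1⟩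
    haveI hneO : Nonempty (Idf.obj pointFlow).Obj :=
      ⟨(adj.unit.app pointFlow).toFun PUnit.unit⟩
    haveI : Subsingleton terminalECat.Obj := inferInstanceAs (Subsingleton PUnit)
    have hWqf : WqECat f := by
      constructor
      · exact bijective_of_subsingleton _
      · intro a b
        obtain rfl := ((hobj a).1).symm
        obtain rfl :=
          ((hobj ((adj.unit.app pointFlow).toFun PUnit.unit)).1).symm.trans (hobj b).1 |>.symm
        haveI : Subsingleton
            ((Idf.obj pointFlow).Hom ((adj.unit.app pointFlow).toFun PUnit.unit)
              ((adj.unit.app pointFlow).toFun PUnit.unit)) :=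
          ⟨fun m m' => eq_of_heq (((hobj _).2 _ m).symm.trans ((hobj _).2 _ m'))⟩
        haveI : Nonempty
            ((Idf.obj pointFlow).Hom ((adj.unit.app pointFlow).toFun PUnit.unit)
              ((adj.unit.app pointFlow).toFun PUnit.unit)) :=
          ⟨(Idf.obj pointFlow).eid _⟩
        haveI : ∀ u v : terminalECat.Obj, Subsingleton (terminalECat.Hom u v) :=
          fun _ _ => inferInstanceAs (Subsingleton PUnit)
        haveI : ∀ u v : terminalECat.Obj, Nonempty (terminalECat.Hom u v) :=
          fun _ _ => inferInstanceAs (Nonempty PUnit)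
        exact @whe_of_subsingleton _ _ ((Idf.obj pointFlow).str _ _) (terminalECat.str _ _) _ _ _ _ _
    have hWqFlow : WqFlow (adj.homEquiv pointFlow terminalECat f) :=
      (hAll pointFlow terminalECat f cof).mp hWqf
    rw [hEquiv] at hWqFlow
    have hwe := hWqFlow.2 PUnit.unit PUnit.unit
    haveI : IsEmpty (pointFlow.Path PUnit.unit PUnit.unit) := inferInstanceAs (IsEmpty Empty)
    haveI : Nonempty ((forgetECat.obj terminalECat).Path (h.toFun PUnit.unit) (h.toFun PUnit.unit)) :=
      inferInstanceAs (Nonempty PUnit)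
    exact @not_whe_of_isEmpty _ _ (pointFlow.str _ _) ((forgetECat.obj terminalECat).str _ _) _ _ _ hwe
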